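/- arXiv:2202.02772 — 3 statements merged into one kernel-verified Lean document; each statement's English description precedes it below -/
import Mathlib

section
/- Let X^n be the stationary geometric-sticky Markov chain with parameter α and base distribution p. For any x ∈ X and any m with 2 ≤ m ≤ n−1, the probability that X_m = x and x appears nowhere else in X^n equals (1−α)²·p_x·(1−p_x)²·(1−(1−α)p_x)^{n−3}. -/
open scoped Classical

/-- The probability that the stationary geometric-sticky Markov chain with stickiness
parameter `α` and base distribution `p` (i.e. `X_1 ~ p` and
`Pr(X_i = z | X_{i-1} = y) = α·1[z=y] + (1-α)·p z`) produces the sample path `x`. -/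
noncomputable def stickyProb {X : Type*} [DecidableEq X] (α : ℝ) (p : X → ℝ) {n : ℕ}
    (x : Fin n → X) : ℝ :=
  (if h : 0 < n then p (x ⟨0, h⟩) else 1) *
  ∏ i : Fin n, if i.val = 0 then 1 else
    ((if x i = x ⟨i.val - 1, lt_of_le_of_lt (Nat.pred_le _) i.isLt⟩ then α else 0)
      + (1 - α) * p (x i))

section Aux

set_option linter.unusedSectionVars false

variable {X : Type*} [Fintype X] [DecidableEq X]

/-- Transition kernel. -/
noncomputable def sT (α : ℝ) (p : X → ℝ) (z y : X) : ℝ :=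
  (if z = y then α else 0) + (1 - α) * p z

/-- Product of transition factors along a path. -/
noncomputable def sW (α : ℝ) (p : X → ℝ) {n : ℕ} (x : Fin n → X) : ℝ :=
  ∏ i : Fin n, if i.val = 0 then 1 else
    sT α p (x i) (x ⟨i.val - 1, lt_of_le_of_lt (Nat.pred_le _) i.isLt⟩)

lemma stickyProb_pos {α : ℝ} {p : X → ℝ} {n : ℕ} (hn : 0 < n) (x : Fin n → X) :
    stickyProb α p x = p (x ⟨0, hn⟩) * sW α p x := by
  rw [stickyProb, dif_pos hn]; rfl

lemma sum_ite_ne (g : X → ℝ) (a : X) :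
    ∑ z, (if z = a then 0 else g z) = (∑ z, g z) - g a := by
  have h : ∀ z, (if z = a then 0 else g z) = g z - (if z = a then g z else 0) := by
    intro z; by_cases hz : z = a <;> simp [hz]
  simp only [h, Finset.sum_sub_distrib, Finset.sum_ite_eq' Finset.univ a g,
    Finset.mem_univ, if_true]

lemma sum_sT (α : ℝ) (p : X → ℝ) (hsum : ∑ z, p z = 1) (y : X) :
    ∑ z, sT α p z y = 1 := by
  simp only [sT, Finset.sum_add_distrib, ← Finset.mul_sum, hsum,
    Finset.sum_ite_eq' Finset.univ y (fun _ => α), Finset.mem_univ, if_true]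
  ring

/-- sum over z ≠ a of T z y, for y ≠ a -/
lemma sum_sT_ne (α : ℝ) (p : X → ℝ) (hsum : ∑ z, p z = 1) {a y : X} (hy : y ≠ a) :
    ∑ z, (if z = a then 0 else sT α p z y) = 1 - (1 - α) * p a := by
  rw [sum_ite_ne, sum_sT α p hsum, sT, if_neg (fun h => hy h.symm)]; ring

/-- sum over z ≠ a of T z a -/
lemma sum_sT_a (α : ℝ) (p : X → ℝ) (hsum : ∑ z, p z = 1) (a : X) :
    ∑ z, (if z = a then 0 else sT α p z a) = (1 - α) * (1 - p a) := by
  rw [sum_ite_ne, sum_sT α p hsum, sT, if_pos rfl]; ring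

lemma sum_p_ne (p : X → ℝ) (hsum : ∑ z, p z = 1) (a : X) :
    ∑ y, (if y = a then 0 else p y) = 1 - p a := by
  rw [sum_ite_ne, hsum]

/-- stationarity step: sum over y ≠ a of p y * T z y, for z ≠ a -/
lemma sum_p_sT (α : ℝ) (p : X → ℝ) (hsum : ∑ z, p z = 1) {a z : X} (hz : z ≠ a) :
    ∑ y, (if y = a then 0 else p y * sT α p z y) = p z * (1 - (1 - α) * p a) := by
  have key : ∀ y, (if y = a then 0 else p y * sT α p z y)
      = (if y = z then (if y = a then 0 else p y * α) else 0)
        + (if y = a then 0 else p y) * ((1 - α) * p z) := by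
    intro y
    by_cases hy : y = a
    · simp [hy]
    · by_cases hyz : y = z
      · subst hyz; simp [sT, hy]; ring
      · simp only [if_neg hyz, if_neg hy, sT, if_neg (Ne.symm hyz)]; ring
  rw [Finset.sum_congr rfl (fun y _ => key y), Finset.sum_add_distrib,
    Finset.sum_ite_eq' Finset.univ z (fun y => if y = a then 0 else p y * α),
    ← Finset.sum_mul, sum_p_ne p hsum a]
  simp [hz]; ring

/-- sum over y ≠ a of p y * T a y -/
lemma sum_p_sT_a (α : ℝ) (p : X → ℝ) (hsum : ∑ z, p z = 1) (a : X) :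
    ∑ y, (if y = a then 0 else p y * sT α p a y) = (1 - p a) * ((1 - α) * p a) := by
  have key : ∀ y, (if y = a then 0 else p y * sT α p a y)
      = (if y = a then 0 else p y) * ((1 - α) * p a) := by
    intro y
    by_cases hy : y = a
    · simp [hy]
    · simp only [if_neg hy, sT, if_neg (Ne.symm hy)]; ring
  rw [Finset.sum_congr rfl (fun y _ => key y), ← Finset.sum_mul, sum_p_ne p hsum a]

lemma cons_mk_zero {N : ℕ} (y : X) (f : Fin (N+1) → X) (h : (0:ℕ) < N+2) :
    (Fin.cons y f : Fin (N+2) → X) ⟨0, h⟩ = y := by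
  rw [show (⟨0, h⟩ : Fin (N+2)) = 0 from rfl, Fin.cons_zero]

lemma cons_mk_succ {N : ℕ} (y : X) (f : Fin (N+1) → X) (k : ℕ) (h : k + 1 < N + 2) :
    (Fin.cons y f : Fin (N+2) → X) ⟨k+1, h⟩ = f ⟨k, by omega⟩ := by
  rw [show (⟨k+1, h⟩ : Fin (N+2)) = Fin.succ ⟨k, by omega⟩ from rfl, Fin.cons_succ]

lemma snoc_mk_lt {N : ℕ} (f : Fin N → X) (z : X) (k : ℕ) (h : k < N) (h2 : k < N + 1) :
    (Fin.snoc f z : Fin (N+1) → X) ⟨k, h2⟩ = f ⟨k, h⟩ := by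
  rw [show (⟨k, h2⟩ : Fin (N+1)) = Fin.castSucc ⟨k, h⟩ from rfl, Fin.snoc_castSucc]

lemma sW_cons (α : ℝ) (p : X → ℝ) {N : ℕ} (y : X) (f : Fin (N+1) → X) :
    sW α p (Fin.cons y f) = sT α p (f 0) y * sW α p f := by
  rw [sW, sW]
  conv_lhs => rw [Fin.prod_univ_succ]
  conv_rhs => rw [Fin.prod_univ_succ]
  simp only [Fin.val_zero, if_pos rfl, one_mul, Fin.val_succ, Nat.add_sub_cancel,
    Fin.cons_succ]
  have hc0 : (Fin.cons y f : Fin (N+2) → X) ⟨((0 : Fin (N+1)) : ℕ), by omega⟩ = y := by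
    rw [show (⟨((0 : Fin (N+1)) : ℕ), by omega⟩ : Fin (N+2)) = 0 from rfl, Fin.cons_zero]
  have hcs : ∀ (k : ℕ) (h : k + 1 < N + 2), (Fin.cons y f : Fin (N+2) → X) ⟨k+1, h⟩
      = f ⟨k, by omega⟩ := by
    intro k h
    rw [show (⟨k+1, h⟩ : Fin (N+2)) = Fin.succ ⟨k, by omega⟩ from rfl, Fin.cons_succ]
  simp [hc0, hcs, Fin.prod_univ_succ]

lemma sW_snoc (α : ℝ) (p : X → ℝ) {N : ℕ} (hN : 1 ≤ N) (f : Fin N → X) (z : X) :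
    sW α p (Fin.snoc f z) = sW α p f * sT α p z (f ⟨N-1, by omega⟩) := by
  have hsc : ∀ (k : ℕ) (h : k < N), (Fin.snoc f z : Fin (N+1) → X) ⟨k, by omega⟩
      = f ⟨k, h⟩ := fun k h => snoc_mk_lt f z k h (by omega)
  have hlast : (Fin.snoc f z : Fin (N+1) → X) ⟨N, by omega⟩ = z := by
    rw [show (⟨N, by omega⟩ : Fin (N+1)) = Fin.last N from rfl, Fin.snoc_last]
  rw [sW, sW, Fin.prod_univ_castSucc]
  congr 1
  · apply Finset.prod_congr rfl
    intro i _
    simp only [Fin.coe_castSucc]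
    by_cases hi : i.val = 0
    · rw [if_pos hi, if_pos hi]
    · rw [if_neg hi, if_neg hi, Fin.snoc_castSucc, hsc (i.val - 1) (by omega)]
  · rw [if_neg (by simp; omega)]
    simp only [Fin.snoc_last, Fin.val_last]
    rw [hsc (N-1) (by omega)]

lemma sum_cons_dec {N : ℕ} (F : (Fin (N+1) → X) → ℝ) :
    ∑ x : Fin (N+1) → X, F x = ∑ y : X, ∑ f : Fin N → X, F (Fin.cons y f) := by
  rw [← Equiv.sum_comp (Fin.consEquiv (fun _ : Fin (N+1) => X)) F, Fintype.sum_prod_type]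
  rfl

lemma sum_snoc_dec {N : ℕ} (F : (Fin (N+1) → X) → ℝ) :
    ∑ x : Fin (N+1) → X, F x = ∑ z : X, ∑ f : Fin N → X, F (Fin.snoc f z) := by
  rw [← Equiv.sum_comp (Fin.snocEquiv (fun _ : Fin (N+1) => X)) F, Fintype.sum_prod_type]
  rfl

/-- The sum of interest: paths where `a` occurs exactly at (0-indexed) position `k`. -/
noncomputable def sS (α : ℝ) (p : X → ℝ) (a : X) (n k : ℕ) : ℝ :=
  ∑ x : Fin n → X, if (∀ i : Fin n, if i.val = k then x i = a else x i ≠ a)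
    then stickyProb α p x else 0

lemma strip_first (α : ℝ) (p : X → ℝ) (hsum : ∑ z, p z = 1) (a : X) (M k : ℕ)
    (hk : 2 ≤ k) :
    sS α p a (M+2) k = (1 - (1 - α) * p a) * sS α p a (M+1) (k-1) := by
  rw [sS, sum_cons_dec]
  have step : ∀ (y : X) (f : Fin (M+1) → X),
      (if (∀ i : Fin (M+2), if i.val = k then (Fin.cons y f : Fin (M+2) → X) i = a
          else (Fin.cons y f : Fin (M+2) → X) i ≠ a)
        then stickyProb α p (Fin.cons y f : Fin (M+2) → X) else 0)
      = (if (∀ j : Fin (M+1), if j.val = k-1 then f j = a else f j ≠ a)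
          then (if y = a then 0 else p y * sT α p (f 0) y) * sW α p f else 0) := by
    intro y f
    have e1 : ∀ j : ℕ, (j + 1 = k) = (j = k - 1) := fun j => propext (by omega)
    have e0 : ((0:ℕ) = k) = False := eq_false (by omega)
    have hcond : (∀ i : Fin (M+2), if i.val = k then (Fin.cons y f : Fin (M+2) → X) i = a
          else (Fin.cons y f : Fin (M+2) → X) i ≠ a)
        ↔ (y ≠ a ∧ ∀ j : Fin (M+1), if j.val = k-1 then f j = a else f j ≠ a) := by
      rw [Fin.forall_fin_succ]
      simp only [Fin.val_zero, Fin.val_succ, Fin.cons_zero, Fin.cons_succ, e0, e1, if_false]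
    by_cases hB : (∀ j : Fin (M+1), if j.val = k-1 then f j = a else f j ≠ a)
    · by_cases hA : y = a
      · rw [if_neg (fun h => (hcond.mp h).1 hA), if_pos hB, if_pos hA, zero_mul]
      · rw [if_pos (hcond.mpr ⟨hA, hB⟩), if_pos hB, if_neg hA,
          stickyProb_pos (by omega), sW_cons, cons_mk_zero]
        ring
    · rw [if_neg (fun h => hB (hcond.mp h).2), if_neg hB]
  rw [Finset.sum_congr rfl (fun y _ => Finset.sum_congr rfl (fun f _ => step y f)),
    Finset.sum_comm]
  have step2 : ∀ f : Fin (M+1) → X,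
      (∑ y, if (∀ j : Fin (M+1), if j.val = k-1 then f j = a else f j ≠ a)
          then (if y = a then 0 else p y * sT α p (f 0) y) * sW α p f else 0)
      = (1 - (1 - α) * p a) *
        (if (∀ j : Fin (M+1), if j.val = k-1 then f j = a else f j ≠ a)
          then stickyProb α p f else 0) := by
    intro f
    by_cases hB : (∀ j : Fin (M+1), if j.val = k-1 then f j = a else f j ≠ a)
    · simp only [if_pos hB]
      have hf0 : f 0 ≠ a := by
        have := hB 0
        rwa [if_neg (by simp; omega)] at this
      rw [← Finset.sum_mul]
      have : (∑ y, if y = a then 0 else p y * sT α p (f 0) y)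
          = p (f 0) * (1 - (1 - α) * p a) := sum_p_sT α p hsum hf0
      rw [this, stickyProb_pos (by omega)]
      have : f ⟨0, by omega⟩ = f 0 := rfl
      rw [this]; ring
    · simp only [if_neg hB, Finset.sum_const_zero, mul_zero]
  rw [Finset.sum_congr rfl (fun f _ => step2 f), ← Finset.mul_sum, sS]

lemma strip_last (α : ℝ) (p : X → ℝ) (hsum : ∑ z, p z = 1) (a : X) (M k : ℕ)
    (hk : k < M) :
    sS α p a (M+2) k = sS α p a (M+1) k * (1 - (1 - α) * p a) := by
  rw [sS, sum_snoc_dec, Finset.sum_comm]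
  have step : ∀ (f : Fin (M+1) → X) (z : X),
      (if (∀ i : Fin (M+2), if i.val = k then (Fin.snoc f z : Fin (M+2) → X) i = a
          else (Fin.snoc f z : Fin (M+2) → X) i ≠ a)
        then stickyProb α p (Fin.snoc f z : Fin (M+2) → X) else 0)
      = (if (∀ j : Fin (M+1), if j.val = k then f j = a else f j ≠ a)
          then stickyProb α p f else 0) *
        (if z = a then 0 else sT α p z (f ⟨M, by omega⟩)) := by
    intro f z
    have eM : ((M+1 : ℕ) = k) = False := eq_false (by omega)
    have hcond : (∀ i : Fin (M+2), if i.val = k then (Fin.snoc f z : Fin (M+2) → X) i = a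
          else (Fin.snoc f z : Fin (M+2) → X) i ≠ a)
        ↔ ((∀ j : Fin (M+1), if j.val = k then f j = a else f j ≠ a) ∧ z ≠ a) := by
      rw [Fin.forall_fin_succ']
      simp only [Fin.coe_castSucc, Fin.snoc_castSucc, Fin.val_last, Fin.snoc_last,
        eM, if_false]
    by_cases hB : (∀ j : Fin (M+1), if j.val = k then f j = a else f j ≠ a)
    · by_cases hA : z = a
      · rw [if_neg (fun h => (hcond.mp h).2 hA), if_pos hB, if_pos hA, mul_zero]
      · rw [if_pos (hcond.mpr ⟨hB, hA⟩), if_pos hB, if_neg hA,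
          stickyProb_pos (by omega), stickyProb_pos (by omega),
          sW_snoc α p (by omega) f z, snoc_mk_lt f z 0 (by omega) (by omega)]
        have : f ⟨M+1-1, by omega⟩ = f ⟨M, by omega⟩ := rfl
        rw [this]; ring
    · rw [if_neg (fun h => hB (hcond.mp h).1), if_neg hB, zero_mul]
  have step2 : ∀ f : Fin (M+1) → X,
      (∑ z, if (∀ i : Fin (M+2), if i.val = k then (Fin.snoc f z : Fin (M+2) → X) i = a
            else (Fin.snoc f z : Fin (M+2) → X) i ≠ a)
          then stickyProb α p (Fin.snoc f z : Fin (M+2) → X) else 0)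
      = (if (∀ j : Fin (M+1), if j.val = k then f j = a else f j ≠ a)
          then stickyProb α p f else 0) * (1 - (1 - α) * p a) := by
    intro f
    rw [Finset.sum_congr rfl (fun z _ => step f z), ← Finset.mul_sum]
    by_cases hB : (∀ j : Fin (M+1), if j.val = k then f j = a else f j ≠ a)
    · have hfM : f ⟨M, by omega⟩ ≠ a := by
        have := hB ⟨M, by omega⟩
        rwa [if_neg (by simp; omega)] at this
      rw [sum_sT_ne α p hsum hfM]
    · simp only [if_neg hB, zero_mul]
  rw [Finset.sum_congr rfl (fun f _ => step2 f), ← Finset.sum_mul, sS]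

lemma sW_one (α : ℝ) (p : X → ℝ) (f : Fin 1 → X) : sW α p f = 1 := by
  rw [sW]; simp

/-- strip-last when the special position is the last of the shorter chain. -/
lemma strip_last_edge (α : ℝ) (p : X → ℝ) (hsum : ∑ z, p z = 1) (a : X) (M : ℕ) :
    sS α p a (M+2) M = sS α p a (M+1) M * ((1 - α) * (1 - p a)) := by
  rw [sS, sum_snoc_dec, Finset.sum_comm]
  have step : ∀ (f : Fin (M+1) → X) (z : X),
      (if (∀ i : Fin (M+2), if i.val = M then (Fin.snoc f z : Fin (M+2) → X) i = a
          else (Fin.snoc f z : Fin (M+2) → X) i ≠ a)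
        then stickyProb α p (Fin.snoc f z : Fin (M+2) → X) else 0)
      = (if (∀ j : Fin (M+1), if j.val = M then f j = a else f j ≠ a)
          then stickyProb α p f else 0) *
        (if z = a then 0 else sT α p z (f ⟨M, by omega⟩)) := by
    intro f z
    have eM : ((M+1 : ℕ) = M) = False := eq_false (by omega)
    have hcond : (∀ i : Fin (M+2), if i.val = M then (Fin.snoc f z : Fin (M+2) → X) i = a
          else (Fin.snoc f z : Fin (M+2) → X) i ≠ a)
        ↔ ((∀ j : Fin (M+1), if j.val = M then f j = a else f j ≠ a) ∧ z ≠ a) := by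
      rw [Fin.forall_fin_succ']
      simp only [Fin.coe_castSucc, Fin.snoc_castSucc, Fin.val_last, Fin.snoc_last,
        eM, if_false]
    by_cases hB : (∀ j : Fin (M+1), if j.val = M then f j = a else f j ≠ a)
    · by_cases hA : z = a
      · rw [if_neg (fun h => (hcond.mp h).2 hA), if_pos hB, if_pos hA, mul_zero]
      · rw [if_pos (hcond.mpr ⟨hB, hA⟩), if_pos hB, if_neg hA,
          stickyProb_pos (by omega), stickyProb_pos (by omega),
          sW_snoc α p (by omega) f z, snoc_mk_lt f z 0 (by omega) (by omega)]
        have : f ⟨M+1-1, by omega⟩ = f ⟨M, by omega⟩ := rfl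
        rw [this]; ring
    · rw [if_neg (fun h => hB (hcond.mp h).1), if_neg hB, zero_mul]
  have step2 : ∀ f : Fin (M+1) → X,
      (∑ z, if (∀ i : Fin (M+2), if i.val = M then (Fin.snoc f z : Fin (M+2) → X) i = a
            else (Fin.snoc f z : Fin (M+2) → X) i ≠ a)
          then stickyProb α p (Fin.snoc f z : Fin (M+2) → X) else 0)
      = (if (∀ j : Fin (M+1), if j.val = M then f j = a else f j ≠ a)
          then stickyProb α p f else 0) * ((1 - α) * (1 - p a)) := by
    intro f
    rw [Finset.sum_congr rfl (fun z _ => step f z), ← Finset.mul_sum]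
    by_cases hB : (∀ j : Fin (M+1), if j.val = M then f j = a else f j ≠ a)
    · have hfM : f ⟨M, by omega⟩ = a := by
        have := hB ⟨M, by omega⟩
        rwa [if_pos rfl] at this
      rw [hfM, sum_sT_a α p hsum a]
    · simp only [if_neg hB, zero_mul]
  rw [Finset.sum_congr rfl (fun f _ => step2 f), ← Finset.sum_mul, sS]

lemma sS_two (α : ℝ) (p : X → ℝ) (hsum : ∑ z, p z = 1) (a : X) :
    sS α p a 2 1 = (1 - p a) * ((1 - α) * p a) := by
  rw [sS, sum_cons_dec, Finset.sum_comm]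
  have step : ∀ (y : X) (f : Fin 1 → X),
      (if (∀ i : Fin 2, if i.val = 1 then (Fin.cons y f : Fin 2 → X) i = a
          else (Fin.cons y f : Fin 2 → X) i ≠ a)
        then stickyProb α p (Fin.cons y f : Fin 2 → X) else 0)
      = (if f 0 = a then (if y = a then 0 else p y * sT α p a y) else 0) := by
    intro y f
    have hcond : (∀ i : Fin 2, if i.val = 1 then (Fin.cons y f : Fin 2 → X) i = a
          else (Fin.cons y f : Fin 2 → X) i ≠ a)
        ↔ (y ≠ a ∧ f 0 = a) := by
      rw [Fin.forall_fin_succ]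
      constructor
      · rintro ⟨h0, hs⟩
        exact ⟨by simpa using h0, by simpa using hs 0⟩
      · rintro ⟨h0, hs⟩
        refine ⟨by simpa using h0, fun j => ?_⟩
        have hj : j = 0 := Subsingleton.elim _ _
        subst hj; simpa using hs
    by_cases hf : f 0 = a
    · by_cases hy : y = a
      · rw [if_neg (fun h => (hcond.mp h).1 hy), if_pos hf, if_pos hy]
      · rw [if_pos (hcond.mpr ⟨hy, hf⟩), if_pos hf, if_neg hy,
          stickyProb_pos (by omega), sW_cons, cons_mk_zero, sW_one, hf]
        ring
    · rw [if_neg (fun h => hf (hcond.mp h).2), if_neg hf]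
  rw [Finset.sum_congr rfl (fun f _ => Finset.sum_congr rfl (fun y _ => step y f))]
  have step2 : ∀ f : Fin 1 → X,
      (∑ y, if f 0 = a then (if y = a then 0 else p y * sT α p a y) else 0)
      = (if f 0 = a then (1 - p a) * ((1 - α) * p a) else 0) := by
    intro f
    by_cases hf : f 0 = a
    · simp only [if_pos hf]; exact sum_p_sT_a α p hsum a
    · simp only [if_neg hf, Finset.sum_const_zero]
  rw [Finset.sum_congr rfl (fun f _ => step2 f),
    ← Equiv.sum_comp (Equiv.funUnique (Fin 1) X).symm]
  have : ∀ v : X, ((Equiv.funUnique (Fin 1) X).symm v) 0 = v := fun v => rfl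
  simp only [this]
  rw [Finset.sum_ite_eq' Finset.univ a (fun _ => (1 - p a) * ((1 - α) * p a))]
  simp

lemma sS_base (α : ℝ) (p : X → ℝ) (hsum : ∑ z, p z = 1) (a : X) :
    sS α p a 3 1 = ((1 - p a) * ((1 - α) * p a)) * ((1 - α) * (1 - p a)) := by
  rw [show (3:ℕ) = 1 + 2 from rfl, strip_last_edge α p hsum a 1, sS_two α p hsum a]

lemma sS_formula (α : ℝ) (p : X → ℝ) (hsum : ∑ z, p z = 1) (a : X) :
    ∀ n k : ℕ, 3 ≤ n → 1 ≤ k → k ≤ n - 2 →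
      sS α p a n k = (1 - α) ^ 2 * p a * (1 - p a) ^ 2 * (1 - (1 - α) * p a) ^ (n - 3) := by
  intro n
  induction n using Nat.strong_induction_on with
  | _ n ih =>
    intro k hn hk1 hk2
    by_cases hk : 2 ≤ k
    · -- strip first; n ≥ k + 2 ≥ 4
      have hn4 : 4 ≤ n := by omega
      obtain ⟨M, rfl⟩ : ∃ M, n = M + 2 := ⟨n - 2, by omega⟩
      rw [strip_first α p hsum a M k hk,
        ih (M+1) (by omega) (k-1) (by omega) (by omega) (by omega)]
      have : M + 2 - 3 = (M + 1 - 3) + 1 := by omega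
      rw [this, pow_succ]
      ring
    · have hk1' : k = 1 := by omega
      subst hk1'
      by_cases hn4 : 4 ≤ n
      · obtain ⟨M, rfl⟩ : ∃ M, n = M + 2 := ⟨n - 2, by omega⟩
        rw [strip_last α p hsum a M 1 (by omega),
          ih (M+1) (by omega) 1 (by omega) (by omega) (by omega)]
        have : M + 2 - 3 = (M + 1 - 3) + 1 := by omega
        rw [this, pow_succ]
        ring
      · have hn3 : n = 3 := by omega
        subst hn3
        rw [sS_base α p hsum a]
        norm_num
        ring
end Aux

/-- For the stationary geometric-sticky Markov chain of length `n` and `2 ≤ m ≤ n-1`,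
the probability that `X_m = a` and `a` appears nowhere else equals
`(1-α)² p_a (1-p_a)² (1-(1-α)p_a)^(n-3)`. (Positions are 1-indexed: `X_m` is `x ⟨m-1,_⟩`.) -/
theorem sticky_prob_singleton_interior
    {X : Type*} [Fintype X] [DecidableEq X] (α : ℝ) (hα0 : 0 ≤ α) (hα1 : α < 1)
    (p : X → ℝ) (hp : ∀ z, 0 ≤ p z) (hsum : ∑ z, p z = 1)
    (n : ℕ) (hn : 3 ≤ n) (m : ℕ) (hm1 : 2 ≤ m) (hm2 : m ≤ n - 1) (a : X) :
    ∑ x : Fin n → X,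
        (if x ⟨m - 1, by omega⟩ = a ∧ (∀ i : Fin n, i.val ≠ m - 1 → x i ≠ a)
          then stickyProb α p x else 0)
      = (1 - α) ^ 2 * p a * (1 - p a) ^ 2 * (1 - (1 - α) * p a) ^ (n - 3) := by
  have key : ∑ x : Fin n → X,
        (if x ⟨m - 1, by omega⟩ = a ∧ (∀ i : Fin n, i.val ≠ m - 1 → x i ≠ a)
          then stickyProb α p x else 0) = sS α p a n (m-1) := by
    rw [sS]
    apply Finset.sum_congr rfl
    intro x _
    apply if_congr _ rfl rfl
    constructor
    · rintro ⟨h1, h2⟩ i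
      by_cases hi : i.val = m - 1
      · rw [if_pos hi]
        have : i = ⟨m-1, by omega⟩ := Fin.ext hi
        rw [this]; exact h1
      · rw [if_neg hi]; exact h2 i hi
    · intro h
      constructor
      · have := h ⟨m-1, by omega⟩
        rwa [if_pos rfl] at this
      · intro i hi
        have := h i
        rwa [if_neg hi] at this
  rw [key, sS_formula α p hsum a n (m-1) hn (by omega) (by omega)]
end

section
/- Let X^n be the stationary geometric-sticky Markov chain with parameter α and base distribution p. For distinct x, y ∈ X and indices m1, m2 with 2 ≤ m1, m1+2 ≤ m2 ≤ n−1, the probability that X_{m1} = x, X_{m2} = y, and neither x nor y appears at any other index equals (1−α)⁴·p_x·p_y·(1−p_x−p_y)³·(1−(1−α)(p_x+p_y))^{n−5}. -/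
open scoped Classical

def chainA {X : Type*} (m1 m2 : ℕ) (a b : X) : ℕ → X → Prop :=
  fun i z => if i = m1 - 1 then z = a else if i = m2 - 1 then z = b else z ≠ a ∧ z ≠ b

noncomputable def chainInit {X : Type*} (p : X → ℝ) (m1 m2 : ℕ) (a b : X) : X → ℝ :=
  fun z => if chainA m1 m2 a b 0 z then p z else 0

noncomputable def chainG {X : Type*} [DecidableEq X] (α : ℝ) (p : X → ℝ) (m1 m2 : ℕ)
    (a b : X) : ℕ → X → X → ℝ :=
  fun i w z => if chainA m1 m2 a b (i - 1) w ∧ chainA m1 m2 a b i z then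
    ((if z = w then α else 0) + (1 - α) * p z) else 0

noncomputable def cF {X : Type*} (α : ℝ) (p : X → ℝ) (m1 m2 : ℕ) (a b : X) : ℕ → ℝ :=
  fun i => if i = m1 - 1 then (1 - α) * p a else if i = m2 - 1 then (1 - α) * p b
    else if i = m1 then (1 - α) * (1 - p a - p b) else if i = m2 then (1 - α) * (1 - p a - p b)
    else if i = 0 then (1 - p a - p b) else (1 - (1 - α) * (p a + p b))

section sums
variable {X : Type*} [Fintype X] [DecidableEq X] (α : ℝ) (p : X → ℝ) (a b : X)

lemma sum_pair_split (hab : a ≠ b) (E : X → ℝ) :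
    ∑ z, (if z ≠ a ∧ z ≠ b then E z else 0) = (∑ z, E z) - E a - E b := by
  have key : ∀ z, (if z ≠ a ∧ z ≠ b then E z else 0)
      = E z - (if z = a then E z else 0) - (if z = b then E z else 0) := by
    intro z
    by_cases h1 : z = a
    · subst h1; simp [hab]
    · by_cases h2 : z = b
      · subst h2; simp [h1]
      · simp [h1, h2]
  rw [Finset.sum_congr rfl fun z _ => key z]
  rw [Finset.sum_sub_distrib, Finset.sum_sub_distrib,
    Finset.sum_ite_eq' Finset.univ a E, Finset.sum_ite_eq' Finset.univ b E,
    if_pos (Finset.mem_univ a), if_pos (Finset.mem_univ b)]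

lemma sum_E (hsum : ∑ z, p z = 1) (w : X) :
    ∑ z, ((if z = w then α else 0) + (1 - α) * p z) = 1 := by
  rw [Finset.sum_add_distrib, Finset.sum_ite_eq' Finset.univ w (fun _ => α),
    if_pos (Finset.mem_univ w), ← Finset.mul_sum, hsum]
  ring

lemma sum_C_C (hsum : ∑ z, p z = 1) (hab : a ≠ b) (w : X) (hwa : w ≠ a) (hwb : w ≠ b) :
    ∑ z, (if z ≠ a ∧ z ≠ b then ((if z = w then α else 0) + (1 - α) * p z) else 0)
      = 1 - (1 - α) * (p a + p b) := by
  rw [sum_pair_split a b hab, sum_E α p hsum w]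
  rw [if_neg (fun h => hwa h.symm), if_neg (fun h => hwb h.symm)]
  ring

lemma sum_C_a (hsum : ∑ z, p z = 1) (hab : a ≠ b) :
    ∑ z, (if z ≠ a ∧ z ≠ b then ((if z = a then α else 0) + (1 - α) * p z) else 0)
      = (1 - α) * (1 - p a - p b) := by
  rw [sum_pair_split a b hab, sum_E α p hsum a]
  rw [if_pos rfl, if_neg (fun h : b = a => hab h.symm)]
  ring

lemma sum_C_b (hsum : ∑ z, p z = 1) (hab : a ≠ b) :
    ∑ z, (if z ≠ a ∧ z ≠ b then ((if z = b then α else 0) + (1 - α) * p z) else 0)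
      = (1 - α) * (1 - p a - p b) := by
  rw [sum_pair_split a b hab, sum_E α p hsum b]
  rw [if_neg hab, if_pos rfl]
  ring

lemma sum_single (t w : X) (hw : w ≠ t) :
    ∑ z, (if z = t then ((if z = w then α else 0) + (1 - α) * p z) else 0)
      = (1 - α) * p t := by
  rw [Finset.sum_ite_eq' Finset.univ t
    (fun z => (if z = w then α else 0) + (1 - α) * p z), if_pos (Finset.mem_univ t),
    if_neg (fun h : t = w => hw h.symm)]
  ring

end sums

lemma chain_sum {X : Type*} [Fintype X] (init : X → ℝ) (g : ℕ → X → X → ℝ)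
    (A : ℕ → X → Prop) (c : ℕ → ℝ)
    (hinit : ∀ z, init z ≠ 0 → A 0 z)
    (hg : ∀ i w z, g i w z ≠ 0 → A i z)
    (hc0 : ∑ z, init z = c 0)
    (hc : ∀ i w, A i w → ∑ z, g (i + 1) w z = c (i + 1)) :
    ∀ m, (∑ x : Fin (m + 1) → X,
        init (x 0) * ∏ i : Fin m, g (i.val + 1) (x i.castSucc) (x i.succ))
      = ∏ i ∈ Finset.range (m + 1), c i := by
  have hsupp : ∀ (k : ℕ) (y : Fin (k + 1) → X),
      init (y 0) * ∏ i : Fin k, g (i.val + 1) (y i.castSucc) (y i.succ) ≠ 0 →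
      A k (y (Fin.last k)) := by
    intro k y h
    match k with
    | 0 =>
      have h1 : init (y 0) ≠ 0 := fun h0 => h (by simp [h0])
      exact hinit _ h1
    | k + 1 =>
      have h2 : ∏ i : Fin (k + 1), g (i.val + 1) (y i.castSucc) (y i.succ) ≠ 0 :=
        fun h0 => h (by simp [h0])
      have h3 := Finset.prod_ne_zero_iff.mp h2 (Fin.last k) (Finset.mem_univ _)
      have h4 := hg _ _ _ h3
      simpa using h4
  intro m
  induction m with
  | zero =>
    rw [Finset.prod_range_one, ← hc0]
    rw [← Equiv.sum_comp (Equiv.funUnique (Fin 1) X).symm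
      (fun x : Fin 1 → X => init (x 0) * ∏ i : Fin 0, g (i.val + 1) (x i.castSucc) (x i.succ))]
    simp
  | succ m ih =>
    rw [← Equiv.sum_comp (⟨fun q : (Fin (m + 1) → X) × X => Fin.snoc q.1 q.2,
        fun x => (Fin.init x, x (Fin.last (m + 1))), fun q => by simp, fun x => by simp⟩ :
        (Fin (m + 1) → X) × X ≃ (Fin (m + 2) → X)) (fun x : Fin (m + 2) → X =>
      init (x 0) * ∏ i : Fin (m + 1), g (i.val + 1) (x i.castSucc) (x i.succ))]
    rw [Fintype.sum_prod_type]
    have key : ∀ (y : Fin (m + 1) → X) (z : X),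
        init ((Fin.snoc y z : Fin (m+2) → X) 0) *
          ∏ i : Fin (m + 1), g (i.val + 1) ((Fin.snoc y z : Fin (m+2) → X) i.castSucc)
            ((Fin.snoc y z : Fin (m+2) → X) i.succ)
        = (init (y 0) * ∏ i : Fin m, g (i.val + 1) (y i.castSucc) (y i.succ))
            * g (m + 1) (y (Fin.last m)) z := by
      intro y z
      rw [Fin.prod_univ_castSucc]
      rw [show ((0 : Fin (m + 2))) = Fin.castSucc 0 by simp]
      simp only [Fin.snoc_castSucc, Fin.succ_castSucc, Fin.coe_castSucc, Fin.snoc_last,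
        Fin.succ_last, Fin.val_last]
      ring
    simp only [Equiv.coe_fn_mk]
    have step1 : (∑ y : Fin (m+1) → X, ∑ z : X,
            init ((Fin.snoc y z : Fin (m+2) → X) 0) *
              ∏ i : Fin (m + 1), g (i.val + 1) ((Fin.snoc y z : Fin (m+2) → X) i.castSucc)
                ((Fin.snoc y z : Fin (m+2) → X) i.succ))
        = ∑ y : Fin (m+1) → X,
            (init (y 0) * ∏ i : Fin m, g (i.val + 1) (y i.castSucc) (y i.succ)) * c (m + 1) := by
      refine Finset.sum_congr rfl fun y _ => ?_
      rw [Finset.sum_congr rfl fun z _ => key y z, ← Finset.mul_sum]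
      by_cases hT : init (y 0) * ∏ i : Fin m, g (i.val + 1) (y i.castSucc) (y i.succ) = 0
      · rw [hT, zero_mul, zero_mul]
      · rw [hc m _ (hsupp m y hT)]
    rw [step1, ← Finset.sum_mul, ih, ← Finset.prod_range_succ]

/-- For the stationary geometric-sticky Markov chain of length `n ≥ 5`, distinct letters
`a ≠ b`, and non-adjacent interior positions `m1`, `m2` with `2 ≤ m1`, `m1 + 2 ≤ m2 ≤ n - 1`,
the probability that `X_{m1} = a`, `X_{m2} = b`, and neither `a` nor `b` appears at any
other index equals `(1-α)⁴ p_a p_b (1-p_a-p_b)³ (1-(1-α)(p_a+p_b))^(n-5)`. -/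
theorem sticky_prob_two_singletons_nonconsecutive
    {X : Type*} [Fintype X] [DecidableEq X] (α : ℝ) (hα0 : 0 ≤ α) (hα1 : α < 1)
    (p : X → ℝ) (hp : ∀ z, 0 ≤ p z) (hsum : ∑ z, p z = 1)
    (n : ℕ) (hn : 5 ≤ n) (m1 m2 : ℕ) (hm1 : 2 ≤ m1) (hm12 : m1 + 2 ≤ m2) (hm2 : m2 ≤ n - 1)
    (a b : X) (hab : a ≠ b) :
    ∑ x : Fin n → X,
        (if x ⟨m1 - 1, by omega⟩ = a ∧ x ⟨m2 - 1, by omega⟩ = b ∧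
            (∀ i : Fin n, i.val ≠ m1 - 1 → i.val ≠ m2 - 1 → x i ≠ a ∧ x i ≠ b)
          then stickyProb α p x else 0)
      = (1 - α) ^ 4 * p a * p b * (1 - p a - p b) ^ 3
          * (1 - (1 - α) * (p a + p b)) ^ (n - 5) := by
  obtain ⟨m, rfl⟩ : ∃ m, n = m + 1 := ⟨n - 1, by omega⟩
  -- pointwise descriptions of chainA
  have hA_at : ∀ (i : ℕ) (z : X), i = m1 - 1 → (chainA m1 m2 a b i z ↔ z = a) := by
    intro i z h
    simp [chainA, h]
  have hB_at : ∀ (i : ℕ) (z : X), i = m2 - 1 → (chainA m1 m2 a b i z ↔ z = b) := by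
    intro i z h
    have h' : m2 - 1 ≠ m1 - 1 := by omega
    simp [chainA, h, h']
  have hC_at : ∀ (i : ℕ) (z : X), i ≠ m1 - 1 → i ≠ m2 - 1 →
      (chainA m1 m2 a b i z ↔ z ≠ a ∧ z ≠ b) := by
    intro i z h1 h2
    simp [chainA, h1, h2]
  -- hypotheses of chain_sum
  have hinit : ∀ z, chainInit p m1 m2 a b z ≠ 0 → chainA m1 m2 a b 0 z := by
    intro z hz
    by_contra h
    exact hz (if_neg h)
  have hg : ∀ i w z, chainG α p m1 m2 a b i w z ≠ 0 → chainA m1 m2 a b i z := by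
    intro i w z hz
    by_contra h
    exact hz (if_neg fun hq => h hq.2)
  have hc0 : ∑ z, chainInit p m1 m2 a b z = cF α p m1 m2 a b 0 := by
    have h1 : (0 : ℕ) ≠ m1 - 1 := by omega
    have h2 : (0 : ℕ) ≠ m2 - 1 := by omega
    calc ∑ z, chainInit p m1 m2 a b z = ∑ z, (if z ≠ a ∧ z ≠ b then p z else 0) :=
          Finset.sum_congr rfl fun z _ => if_congr (hC_at 0 z h1 h2) rfl rfl
      _ = cF α p m1 m2 a b 0 := by
          rw [sum_pair_split a b hab p, hsum]
          have h3 : (0:ℕ) ≠ m1 := by omega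
          have h4 : (0:ℕ) ≠ m2 := by omega
          simp [cF, h1, h2, h3, h4]
  have hc : ∀ i w, chainA m1 m2 a b i w →
      ∑ z, chainG α p m1 m2 a b (i + 1) w z = cF α p m1 m2 a b (i + 1) := by
    intro i w hw
    have hsimp : ∀ z, chainG α p m1 m2 a b (i + 1) w z
        = if chainA m1 m2 a b (i + 1) z then ((if z = w then α else 0) + (1 - α) * p z)
          else 0 := by
      intro z
      simp only [chainG, Nat.add_sub_cancel]
      by_cases h : chainA m1 m2 a b (i + 1) z
      · rw [if_pos ⟨hw, h⟩, if_pos h]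
      · rw [if_neg fun hq => h hq.2, if_neg h]
    rw [Finset.sum_congr rfl fun z _ => hsimp z]
    by_cases h1 : i + 1 = m1 - 1
    · have hwa : w ≠ a := ((hC_at i w (by omega) (by omega)).mp hw).1
      rw [Finset.sum_congr rfl fun z _ => if_congr (hA_at (i+1) z h1) rfl rfl,
        show cF α p m1 m2 a b (i + 1) = (1 - α) * p a from by simp [cF, h1]]
      exact sum_single α p a w hwa
    · by_cases h2 : i + 1 = m2 - 1
      · have hwb : w ≠ b := ((hC_at i w (by omega) (by omega)).mp hw).2
        rw [Finset.sum_congr rfl fun z _ => if_congr (hB_at (i+1) z h2) rfl rfl,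
          show cF α p m1 m2 a b (i + 1) = (1 - α) * p b from by
            have h' : m2 - 1 ≠ m1 - 1 := by omega
            simp [cF, h2, h']]
        exact sum_single α p b w hwb
      · by_cases h3 : i + 1 = m1
        · have hwa : w = a := (hA_at i w (by omega)).mp hw
          rw [Finset.sum_congr rfl fun z _ => if_congr (hC_at (i+1) z h1 h2) rfl rfl,
            show cF α p m1 m2 a b (i + 1) = (1 - α) * (1 - p a - p b) from by
              have k1 : m1 ≠ m1 - 1 := by omega
              have k2 : m1 ≠ m2 - 1 := by omega
              simp [cF, h3, k1, k2]]
          subst hwa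
          exact sum_C_a α p w b hsum hab
        · by_cases h4 : i + 1 = m2
          · have hwb : w = b := (hB_at i w (by omega)).mp hw
            rw [Finset.sum_congr rfl fun z _ => if_congr (hC_at (i+1) z h1 h2) rfl rfl,
              show cF α p m1 m2 a b (i + 1) = (1 - α) * (1 - p a - p b) from by
                have k1 : m2 ≠ m1 - 1 := by omega
                have k2 : m2 ≠ m2 - 1 := by omega
                have k3 : m2 ≠ m1 := by omega
                simp [cF, h4, k1, k2, k3]]
            subst hwb
            exact sum_C_b α p a w hsum hab
          · have hw' : w ≠ a ∧ w ≠ b := (hC_at i w (by omega) (by omega)).mp hw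
            rw [Finset.sum_congr rfl fun z _ => if_congr (hC_at (i+1) z h1 h2) rfl rfl,
              show cF α p m1 m2 a b (i + 1) = 1 - (1 - α) * (p a + p b) from by
                simp [cF, h1, h2, h3, h4]]
            exact sum_C_C α p a b hsum hab w hw'.1 hw'.2
  -- rewrite each summand
  have hstep : ∀ x : Fin (m + 1) → X,
      (if x ⟨m1 - 1, by omega⟩ = a ∧ x ⟨m2 - 1, by omega⟩ = b ∧
          (∀ i : Fin (m + 1), i.val ≠ m1 - 1 → i.val ≠ m2 - 1 → x i ≠ a ∧ x i ≠ b)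
        then stickyProb α p x else 0)
      = chainInit p m1 m2 a b (x 0) *
          ∏ i : Fin m, chainG α p m1 m2 a b (i.val + 1) (x i.castSucc) (x i.succ) := by
    intro x
    have hcond_iff : (x ⟨m1 - 1, by omega⟩ = a ∧ x ⟨m2 - 1, by omega⟩ = b ∧
          (∀ i : Fin (m + 1), i.val ≠ m1 - 1 → i.val ≠ m2 - 1 → x i ≠ a ∧ x i ≠ b))
        ↔ ∀ i : Fin (m + 1), chainA m1 m2 a b i.val (x i) := by
      constructor
      · rintro ⟨ha', hb', hC⟩ i
        by_cases h1 : i.val = m1 - 1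
        · refine (hA_at i.val (x i) h1).mpr ?_
          rw [show i = ⟨m1 - 1, by omega⟩ from Fin.ext h1]
          exact ha'
        · by_cases h2 : i.val = m2 - 1
          · refine (hB_at i.val (x i) h2).mpr ?_
            rw [show i = ⟨m2 - 1, by omega⟩ from Fin.ext h2]
            exact hb'
          · exact (hC_at i.val (x i) h1 h2).mpr (hC i h1 h2)
      · intro hall
        exact ⟨(hA_at _ _ rfl).mp (hall ⟨m1 - 1, by omega⟩),
          (hB_at _ _ rfl).mp (hall ⟨m2 - 1, by omega⟩),
          fun i hi1 hi2 => (hC_at _ _ hi1 hi2).mp (hall i)⟩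
    by_cases hcx : ∀ i : Fin (m + 1), chainA m1 m2 a b i.val (x i)
    · rw [if_pos (hcond_iff.mpr hcx)]
      unfold stickyProb
      rw [dif_pos (Nat.succ_pos m), Fin.prod_univ_succ]
      have h00 : ((0 : Fin (m + 1)).val = 0) := rfl
      rw [if_pos h00, one_mul]
      have hinit' : chainInit p m1 m2 a b (x 0) = p (x 0) := if_pos (hcx 0)
      have hx0 : x ⟨0, Nat.succ_pos m⟩ = x 0 := by
        congr 1
      rw [hinit', hx0]
      refine congrArg (fun t => p (x 0) * t) (Finset.prod_congr rfl fun i _ => ?_)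
      have hval : (i.succ).val = i.val + 1 := rfl
      rw [if_neg (by simp [hval] : ¬ (i.succ).val = 0)]
      have harg : ∀ h : (i.succ).val - 1 < m + 1,
          x ⟨(i.succ).val - 1, h⟩ = x i.castSucc := fun h => congrArg x (Fin.ext (by simp))
      rw [harg]
      have hGA : chainA m1 m2 a b ((i.val + 1) - 1) (x i.castSucc)
          ∧ chainA m1 m2 a b (i.val + 1) (x i.succ) := by
        constructor
        · simpa using hcx i.castSucc
        · simpa using hcx i.succ
      exact (if_pos hGA).symm
    · rw [if_neg fun hc' => hcx (hcond_iff.mp hc')]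
      symm
      obtain ⟨i, hi⟩ := not_forall.mp hcx
      by_cases hi0 : i.val = 0
      · apply mul_eq_zero_of_left
        have hieq : i = 0 := Fin.ext hi0
        rw [hieq] at hi
        exact if_neg hi
      · apply mul_eq_zero_of_right
        refine Finset.prod_eq_zero (Finset.mem_univ (⟨i.val - 1, by omega⟩ : Fin m)) ?_
        have hsucc : (⟨i.val - 1, by omega⟩ : Fin m).succ = i := Fin.ext (by simp; omega)
        have hval : ((⟨i.val - 1, by omega⟩ : Fin m)).val + 1 = i.val := by simp; omega
        rw [hsucc, hval]
        exact if_neg fun hq => hi hq.2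
  rw [Finset.sum_congr rfl fun x _ => hstep x,
    chain_sum (chainInit p m1 m2 a b) (chainG α p m1 m2 a b) (chainA m1 m2 a b)
      (cF α p m1 m2 a b) hinit hg hc0 hc m]
  -- compute the product of cF over range (m+1)
  have hsub : ({0, m1 - 1, m1, m2 - 1, m2} : Finset ℕ) ⊆ Finset.range (m + 1) := by
    intro i hi
    simp only [Finset.mem_insert, Finset.mem_singleton] at hi
    simp only [Finset.mem_range]
    omega
  rw [← Finset.prod_sdiff hsub]
  have hsd : ∀ i ∈ Finset.range (m + 1) \ ({0, m1 - 1, m1, m2 - 1, m2} : Finset ℕ),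
      cF α p m1 m2 a b i = 1 - (1 - α) * (p a + p b) := by
    intro i hi
    simp only [Finset.mem_sdiff, Finset.mem_insert, Finset.mem_singleton, not_or] at hi
    obtain ⟨-, h0, h1, h2, h3, h4⟩ := hi
    simp [cF, h0, h1, h2, h3, h4]
  rw [Finset.prod_congr rfl hsd, Finset.prod_const]
  have hcard : (Finset.range (m + 1) \ ({0, m1 - 1, m1, m2 - 1, m2} : Finset ℕ)).card
      = m + 1 - 5 := by
    rw [Finset.card_sdiff_of_subset hsub, Finset.card_range]
    congr 1
    rw [Finset.card_insert_of_notMem (by simp; omega),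
      Finset.card_insert_of_notMem (by simp; omega),
      Finset.card_insert_of_notMem (by simp; omega),
      Finset.card_insert_of_notMem (by simp; omega), Finset.card_singleton]
  rw [hcard]
  have hprod5 : ∏ i ∈ ({0, m1 - 1, m1, m2 - 1, m2} : Finset ℕ), cF α p m1 m2 a b i
      = (1 - p a - p b) * ((1 - α) * p a) * ((1 - α) * (1 - p a - p b))
        * ((1 - α) * p b) * ((1 - α) * (1 - p a - p b)) := by
    rw [Finset.prod_insert (by simp; omega), Finset.prod_insert (by simp; omega),
      Finset.prod_insert (by simp; omega), Finset.prod_insert (by simp; omega),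
      Finset.prod_singleton]
    have e0 : cF α p m1 m2 a b 0 = 1 - p a - p b := by
      have k1 : (0:ℕ) ≠ m1 - 1 := by omega
      have k2 : (0:ℕ) ≠ m2 - 1 := by omega
      have k3 : (0:ℕ) ≠ m1 := by omega
      have k4 : (0:ℕ) ≠ m2 := by omega
      simp [cF, k1, k2, k3, k4]
    have e1 : cF α p m1 m2 a b (m1 - 1) = (1 - α) * p a := by
      simp [cF]
    have e2 : cF α p m1 m2 a b m1 = (1 - α) * (1 - p a - p b) := by
      have k1 : m1 ≠ m1 - 1 := by omega
      have k2 : m1 ≠ m2 - 1 := by omega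
      simp [cF, k1, k2]
    have e3 : cF α p m1 m2 a b (m2 - 1) = (1 - α) * p b := by
      have k1 : m2 - 1 ≠ m1 - 1 := by omega
      simp [cF, k1]
    have e4 : cF α p m1 m2 a b m2 = (1 - α) * (1 - p a - p b) := by
      have k1 : m2 ≠ m1 - 1 := by omega
      have k2 : m2 ≠ m2 - 1 := by omega
      have k3 : m2 ≠ m1 := by omega
      simp [cF, k1, k2, k3]
    rw [e0, e1, e2, e3, e4]
    ring
  rw [hprod5]
  ring
end

section
/- For the stationary geometric-sticky Markov chain X^n with parameter α and base distribution p on finite alphabet X, the sum over x ∈ X of p_x²·Pr(x never appears in X^n) is at most 1/((1−α)(n+1)). -/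
open scoped Classical

set_option linter.unusedSectionVars false

section Aux

variable {X : Type*} [Fintype X] [DecidableEq X]

lemma stickyProb_succ (α : ℝ) (p : X → ℝ) {m : ℕ} (x : Fin (m + 1) → X) :
    stickyProb α p x = p (x 0) *
      ∏ i : Fin m, ((if x i.succ = x i.castSucc then α else 0) + (1 - α) * p (x i.succ)) := by
  unfold stickyProb
  rw [dif_pos (Nat.succ_pos m)]
  congr 1
  rw [Fin.prod_univ_succ, if_pos (show ((0 : Fin (m+1)) : ℕ) = 0 from rfl), one_mul]
  apply Finset.prod_congr rfl
  intro i _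
  rw [if_neg (by simp [Fin.val_succ])]
  have h1 : ∀ (h : ((i.succ : Fin (m+1)) : ℕ) - 1 < m + 1),
      (⟨((i.succ : Fin (m+1)) : ℕ) - 1, h⟩ : Fin (m+1)) = i.castSucc := by
    intro h; ext; simp [Fin.val_succ]
  rw [h1 _]

lemma sum_ne_eq (p : X → ℝ) (hsum : ∑ z, p z = 1) (a : X) :
    ∑ z : X, (if z ≠ a then p z else 0) = 1 - p a := by
  have h2 : ∑ z : X, (if z = a then p z else 0) = p a := by
    simp [Finset.sum_ite_eq']
  have h3 : ∑ z : X, ((if z ≠ a then p z else 0) + (if z = a then p z else 0)) = 1 := by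
    rw [← hsum]
    apply Finset.sum_congr rfl
    intro z _
    by_cases h : z = a <;> simp [h]
  rw [Finset.sum_add_distrib, h2] at h3
  linarith

lemma sum_trans (α : ℝ) (p : X → ℝ) (hsum : ∑ z, p z = 1) (a w : X) (hw : w ≠ a) :
    ∑ z : X, (if z ≠ a then ((if z = w then α else 0) + (1 - α) * p z) else 0)
      = 1 - (1 - α) * p a := by
  have key : ∀ z : X, (if z ≠ a then ((if z = w then α else 0) + (1 - α) * p z) else 0)
      = (if z = w then α else 0) + (1 - α) * (if z ≠ a then p z else 0) := by
    intro z
    by_cases hz : z = a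
    · subst hz
      simp [Ne.symm hw]
    · simp [hz]
  rw [Finset.sum_congr rfl (fun z _ => key z), Finset.sum_add_distrib]
  rw [Finset.sum_ite_eq' Finset.univ w (fun _ => α)]
  rw [← Finset.mul_sum, sum_ne_eq p hsum a]
  simp only [Finset.mem_univ, if_true]
  ring

lemma sum_avoid (α : ℝ) (p : X → ℝ) (hsum : ∑ z, p z = 1) (a : X) (m : ℕ) :
    ∑ x : Fin (m + 1) → X, (if ∀ i, x i ≠ a then stickyProb α p x else 0)
      = (1 - p a) * (1 - (1 - α) * p a) ^ m := by
  induction m with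
  | zero =>
    rw [← Equiv.sum_comp (Equiv.funUnique (Fin 1) X).symm]
    have : ∀ z : X, (if ∀ i : Fin 1, ((Equiv.funUnique (Fin 1) X).symm z) i ≠ a
        then stickyProb α p ((Equiv.funUnique (Fin 1) X).symm z) else 0)
        = (if z ≠ a then p z else 0) := by
      intro z
      rw [stickyProb_succ]
      simp [Equiv.funUnique]
    rw [Finset.sum_congr rfl (fun z _ => this z), sum_ne_eq p hsum a]
    simp
  | succ m ih =>
    set F : (Fin (m + 2) → X) → ℝ :=
      fun x => (if ∀ i, x i ≠ a then stickyProb α p x else 0) with hF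
    have e := Fin.snocEquiv (fun _ : Fin (m + 2) => X)
    rw [show (∑ x : Fin (m + 2) → X, F x)
        = ∑ zy : X × (Fin (m + 1) → X), F (Fin.snoc zy.2 zy.1) from
      (Fintype.sum_equiv (Fin.snocEquiv (fun _ : Fin (m + 2) => X)) _ _ (fun zy => by
        simp [Fin.snocEquiv])).symm]
    rw [Fintype.sum_prod_type, Finset.sum_comm]
    have key : ∀ y : Fin (m + 1) → X,
        (∑ z : X, F (Fin.snoc y z))
        = (if ∀ i, y i ≠ a then stickyProb α p y else 0) * (1 - (1 - α) * p a) := by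
      intro y
      by_cases hy : ∀ i : Fin (m + 1), y i ≠ a
      · have hyl : y (Fin.last m) ≠ a := hy _
        have hFz : ∀ z : X, F (Fin.snoc y z)
            = stickyProb α p y *
              (if z ≠ a then ((if z = y (Fin.last m) then α else 0) + (1 - α) * p z) else 0) := by
          intro z
          have hcond : (∀ i : Fin (m + 2), (Fin.snoc y z : Fin (m+2) → X) i ≠ a) ↔ (z ≠ a) := by
            rw [Fin.forall_fin_succ']
            simp [Fin.snoc_castSucc, Fin.snoc_last, hy]
          have hsp : stickyProb α p (Fin.snoc y z)
              = stickyProb α p y *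
                ((if z = y (Fin.last m) then α else 0) + (1 - α) * p z) := by
            rw [stickyProb_succ, stickyProb_succ]
            rw [Fin.prod_univ_castSucc]
            have h0 : (Fin.snoc y z : Fin (m+2) → X) 0 = y 0 := by
              rw [show (0 : Fin (m + 2)) = Fin.castSucc 0 from rfl, Fin.snoc_castSucc]
            have hprod : ∀ i : Fin m,
                ((if (Fin.snoc y z : Fin (m+2) → X) (i.castSucc).succ
                      = (Fin.snoc y z : Fin (m+2) → X) (i.castSucc).castSucc then α else 0)
                  + (1 - α) * p ((Fin.snoc y z : Fin (m+2) → X) (i.castSucc).succ))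
                = ((if y i.succ = y i.castSucc then α else 0) + (1 - α) * p (y i.succ)) := by
              intro i
              rw [Fin.succ_castSucc, Fin.snoc_castSucc, Fin.snoc_castSucc]
            rw [Finset.prod_congr rfl (fun i _ => hprod i), h0]
            rw [Fin.succ_last, Fin.snoc_last, Fin.snoc_castSucc]
            ring
          by_cases hz : z ≠ a
          · rw [hF]
            simp only [hcond]
            rw [if_pos hz, if_pos hz, hsp]
          · rw [hF]
            simp only [hcond, hz, if_false]
            simp at hz
            simp [hz]
        rw [Finset.sum_congr rfl (fun z _ => hFz z), ← Finset.mul_sum,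
          sum_trans α p hsum a _ hyl, if_pos hy]
      · rw [if_neg hy, zero_mul]
        apply Finset.sum_eq_zero
        intro z _
        rw [hF]
        simp only [ite_eq_right_iff]
        intro hall
        exfalso
        exact hy (fun i => by
          have := hall i.castSucc
          rwa [Fin.snoc_castSucc] at this)
    rw [Finset.sum_congr rfl (fun y _ => key y), ← Finset.sum_mul, ih, pow_succ]
    ring

lemma s_pow_bound (s : ℝ) (hs0 : 0 ≤ s) (hs1 : s ≤ 1) (k : ℕ) :
    ((k : ℝ) + 1) * (s * (1 - s) ^ k) ≤ 1 := by
  have h1s0 : 0 ≤ 1 - s := by linarith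
  have h1s1 : 1 - s ≤ 1 := by linarith
  have hG : ∀ i ∈ Finset.range (k + 1), (1 - s) ^ k ≤ (1 - s) ^ i := by
    intro i hi
    exact pow_le_pow_of_le_one h1s0 h1s1 (Nat.lt_succ_iff.mp (Finset.mem_range.mp hi))
  have hle : ((k : ℝ) + 1) * (1 - s) ^ k ≤ ∑ i ∈ Finset.range (k + 1), (1 - s) ^ i := by
    calc ((k : ℝ) + 1) * (1 - s) ^ k = ∑ _i ∈ Finset.range (k + 1), (1 - s) ^ k := by
          simp [mul_comm]
      _ ≤ _ := Finset.sum_le_sum hG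
  have hgeom : (∑ i ∈ Finset.range (k + 1), (1 - s) ^ i) * ((1 - s) - 1)
      = (1 - s) ^ (k + 1) - 1 := geom_sum_mul _ _
  have hsG : s * ∑ i ∈ Finset.range (k + 1), (1 - s) ^ i = 1 - (1 - s) ^ (k + 1) := by
    nlinarith [hgeom]
  have hpow : 0 ≤ (1 - s) ^ (k + 1) := pow_nonneg h1s0 _
  nlinarith [mul_le_mul_of_nonneg_left hle hs0]

end Aux

/-- For the stationary geometric-sticky Markov chain of length `n ≥ 1`, the sum over letters
`a` of `p_a² · Pr(a never appears)` is at most `1 / ((1-α)(n+1))`. -/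
theorem sticky_sum_sq_missing_le
    {X : Type*} [Fintype X] [DecidableEq X] (α : ℝ) (hα0 : 0 ≤ α) (hα1 : α < 1)
    (p : X → ℝ) (hp : ∀ z, 0 ≤ p z) (hsum : ∑ z, p z = 1)
    (n : ℕ) (hn : 1 ≤ n) :
    ∑ a : X, (p a) ^ 2 *
        (∑ x : Fin n → X, (if ∀ i, x i ≠ a then stickyProb α p x else 0))
      ≤ 1 / ((1 - α) * ((n : ℝ) + 1)) := by
  obtain ⟨m, rfl⟩ : ∃ m, n = m + 1 := ⟨n - 1, (Nat.succ_pred_eq_of_pos hn).symm⟩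
  have hβ : (0:ℝ) < 1 - α := by linarith
  have hβ1 : (1:ℝ) - α ≤ 1 := by linarith
  have hpa1 : ∀ a : X, p a ≤ 1 := by
    intro a
    rw [← hsum]
    exact Finset.single_le_sum (fun z _ => hp z) (Finset.mem_univ a)
  have hpos : (0:ℝ) < (1 - α) * ((m + 1 : ℕ) + 1 : ℝ) := by
    apply mul_pos hβ; positivity
  calc ∑ a : X, (p a) ^ 2 *
        (∑ x : Fin (m + 1) → X, (if ∀ i, x i ≠ a then stickyProb α p x else 0))
      = ∑ a : X, (p a) ^ 2 * ((1 - p a) * (1 - (1 - α) * p a) ^ m) := by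
        exact Finset.sum_congr rfl (fun a _ => by rw [sum_avoid α p hsum a m])
    _ ≤ ∑ a : X, p a * (1 / ((1 - α) * ((m + 1 : ℕ) + 1 : ℝ))) := by
        apply Finset.sum_le_sum
        intro a _
        set s : ℝ := (1 - α) * p a with hs
        have hs0 : 0 ≤ s := mul_nonneg (le_of_lt hβ) (hp a)
        have hs1 : s ≤ 1 := by
          calc s ≤ 1 * p a := by
                apply mul_le_mul_of_nonneg_right hβ1 (hp a)
            _ ≤ 1 := by rw [one_mul]; exact hpa1 a
        have h1 : (1:ℝ) - p a ≤ 1 - s := by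
          have : s ≤ p a := by
            calc s ≤ 1 * p a := mul_le_mul_of_nonneg_right hβ1 (hp a)
              _ = p a := one_mul _
          linarith
        have hpow0 : (0:ℝ) ≤ (1 - s) ^ m := by
          apply pow_nonneg; nlinarith [hpa1 a, hp a]
        have step1 : (p a) ^ 2 * ((1 - p a) * (1 - s) ^ m)
            ≤ p a * (s * (1 - s) ^ (m + 1)) / (1 - α) := by
          have key : (p a) * ((1 - p a) * (1 - s) ^ m) ≤ (s * (1 - s) ^ (m + 1)) / (1 - α) := by
            rw [le_div_iff₀ hβ]
            have : s * (1 - s) ^ (m+1) = ((1 - α) * p a) * ((1 - s) * (1 - s) ^ m) := by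
              rw [pow_succ]; ring
            rw [this]
            have h2 : p a * ((1 - p a) * (1 - s) ^ m) * (1 - α)
                = (1 - α) * p a * ((1 - p a) * (1 - s) ^ m) := by ring
            rw [h2]
            apply mul_le_mul_of_nonneg_left _ (mul_nonneg (le_of_lt hβ) (hp a))
            apply mul_le_mul_of_nonneg_right h1 hpow0
          calc (p a) ^ 2 * ((1 - p a) * (1 - s) ^ m)
              = p a * ((p a) * ((1 - p a) * (1 - s) ^ m)) := by ring
            _ ≤ p a * ((s * (1 - s) ^ (m + 1)) / (1 - α)) :=
                mul_le_mul_of_nonneg_left key (hp a)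
            _ = p a * (s * (1 - s) ^ (m + 1)) / (1 - α) := by ring
        have step2 : s * (1 - s) ^ (m + 1) ≤ 1 / ((m : ℝ) + 1 + 1) := by
          have := s_pow_bound s hs0 hs1 (m + 1)
          rw [le_div_iff₀ (by positivity : (0:ℝ) < (m : ℝ) + 1 + 1)]
          push_cast at this ⊢
          linarith
        calc (p a) ^ 2 * ((1 - p a) * (1 - s) ^ m)
            ≤ p a * (s * (1 - s) ^ (m + 1)) / (1 - α) := step1
          _ ≤ p a * (1 / ((m : ℝ) + 1 + 1)) / (1 - α) := by
              gcongr
              exact hp a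
          _ = p a * (1 / ((1 - α) * ((m + 1 : ℕ) + 1 : ℝ))) := by
              push_cast
              rw [div_eq_mul_inv, one_div, one_div, mul_inv]
              ring
    _ = 1 / ((1 - α) * ((m + 1 : ℕ) + 1 : ℝ)) := by
        rw [← Finset.sum_mul, hsum, one_mul]
end
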